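/- Let 0 < u < 1. There exists an infinite sequence (b_k)_{k≥1} of positive reals with b_2 = 1, satisfying b_k b_{k+1} = b_k + u b_{k-1}^2 for all k ≥ 2 (equivalently b_{k+1} = 1 + u b_{k-1}^2 / b_k), and such that b_k ≤ 1/(1-u) for all k. -/

import Mathlib

noncomputable def stmt6F (u : ℝ) (p : ℝ × ℝ) : ℝ × ℝ := (p.2, 1 + u * p.1 ^ 2 / p.2)

noncomputable def stmt6it (u a : ℝ) (n : ℕ) : ℝ × ℝ := (stmt6F u)^[n] (a, 1)

lemma stmt6it_zero (u a : ℝ) : stmt6it u a 0 = (a, 1) := rfl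

lemma stmt6it_succ (u a : ℝ) (n : ℕ) :
    stmt6it u a (n + 1) = stmt6F u (stmt6it u a n) := Function.iterate_succ_apply' _ _ _

lemma stmt6_snd_ge_one (u a : ℝ) (hu : 0 ≤ u) : ∀ n, 1 ≤ (stmt6it u a n).2 := by
  intro n
  induction n with
  | zero => simp [stmt6it_zero]
  | succ m ih =>
    rw [stmt6it_succ]
    have hpos : (0:ℝ) < (stmt6it u a m).2 := lt_of_lt_of_le one_pos ih
    have : 0 ≤ u * (stmt6it u a m).1 ^ 2 / (stmt6it u a m).2 :=
      div_nonneg (mul_nonneg hu (sq_nonneg _)) hpos.le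
    simp only [stmt6F]
    linarith

lemma stmt6_fst_nonneg (u a : ℝ) (hu : 0 ≤ u) (ha : 0 ≤ a) : ∀ n, 0 ≤ (stmt6it u a n).1 := by
  intro n
  cases n with
  | zero => simpa [stmt6it_zero]
  | succ m =>
    rw [stmt6it_succ]
    simp only [stmt6F]
    exact le_trans zero_le_one (stmt6_snd_ge_one u a hu m)

lemma stmt6_cont (u : ℝ) (hu : 0 ≤ u) (n : ℕ) :
    Continuous (fun a => (stmt6it u a n).1) ∧ Continuous (fun a => (stmt6it u a n).2) := by
  induction n with
  | zero => exact ⟨continuous_id, continuous_const⟩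
  | succ m ih =>
    obtain ⟨h1, h2⟩ := ih
    have hne : ∀ a, (stmt6it u a m).2 ≠ 0 :=
      fun a => ne_of_gt (lt_of_lt_of_le one_pos (stmt6_snd_ge_one u a hu m))
    constructor
    · simp only [stmt6it_succ, stmt6F]
      exact h2
    · simp only [stmt6it_succ, stmt6F]
      exact continuous_const.add (((continuous_const.mul (h1.pow 2)).div h2 hne))

/-- State transitions: A p means (fst in [0,M], snd > M); B p means (fst > M, snd in (0,M]). -/
lemma stmt6_stepAB (u M : ℝ) (hu0 : 0 < u) (h1M : 1 < M) (hMu : u * M = M - 1)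
    (p : ℝ × ℝ) (h : 0 ≤ p.1 ∧ p.1 ≤ M ∧ M < p.2) :
    M < (stmt6F u p).1 ∧ 0 < (stmt6F u p).2 ∧ (stmt6F u p).2 ≤ M := by
  obtain ⟨h0, hle, hgt⟩ := h
  have hp2 : (0:ℝ) < p.2 := lt_trans (lt_trans one_pos h1M) hgt
  have hq : p.1 ^ 2 / p.2 ≤ M := by
    rw [div_le_iff₀ hp2]
    nlinarith
  refine ⟨hgt, ?_, ?_⟩
  · simp only [stmt6F]
    have : 0 ≤ u * p.1 ^ 2 / p.2 := div_nonneg (mul_nonneg hu0.le (sq_nonneg _)) hp2.le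
    linarith
  · simp only [stmt6F]
    have : u * p.1 ^ 2 / p.2 ≤ u * M := by
      rw [mul_div_assoc]
      exact mul_le_mul_of_nonneg_left hq hu0.le
    linarith

lemma stmt6_stepBA (u M : ℝ) (hu0 : 0 < u) (h1M : 1 < M) (hMu : u * M = M - 1)
    (p : ℝ × ℝ) (h : M < p.1 ∧ 0 < p.2 ∧ p.2 ≤ M) :
    0 ≤ (stmt6F u p).1 ∧ (stmt6F u p).1 ≤ M ∧ M < (stmt6F u p).2 := by
  obtain ⟨hgt, hp2, hle⟩ := h
  have hM0 : (0:ℝ) < M := lt_trans one_pos h1M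
  have hq : M < p.1 ^ 2 / p.2 := by
    rw [lt_div_iff₀ hp2]
    nlinarith
  refine ⟨hp2.le, hle, ?_⟩
  simp only [stmt6F]
  have : u * M < u * p.1 ^ 2 / p.2 := by
    rw [mul_div_assoc]
    exact mul_lt_mul_of_pos_left hq hu0
  linarith

lemma stmt6_alternate (u M a : ℝ) (hu0 : 0 < u) (h1M : 1 < M) (hMu : u * M = M - 1)
    (n : ℕ) (hA : 0 ≤ (stmt6it u a n).1 ∧ (stmt6it u a n).1 ≤ M ∧ M < (stmt6it u a n).2) :
    ∀ j, (M < (stmt6it u a (n + 2 * j)).2) ∧ ((stmt6it u a (n + 2 * j + 1)).2 ≤ M) := by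
  have key : ∀ j, 0 ≤ (stmt6it u a (n + 2 * j)).1 ∧ (stmt6it u a (n + 2 * j)).1 ≤ M ∧
      M < (stmt6it u a (n + 2 * j)).2 := by
    intro j
    induction j with
    | zero => simpa using hA
    | succ m ih =>
      have hB := stmt6_stepAB u M hu0 h1M hMu _ ih
      rw [← stmt6it_succ] at hB
      have hA2 := stmt6_stepBA u M hu0 h1M hMu _ hB
      rw [← stmt6it_succ] at hA2
      have : n + 2 * (m + 1) = n + 2 * m + 1 + 1 := by ring
      rw [this]
      exact hA2
  intro j
  refine ⟨(key j).2.2, ?_⟩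
  have hB := stmt6_stepAB u M hu0 h1M hMu _ (key j)
  rw [← stmt6it_succ] at hB
  exact hB.2.2

/-- the shift identity: orbit of a=0 is the shift of the orbit of a=1 -/
lemma stmt6_shift (u : ℝ) (n : ℕ) : stmt6it u 0 (n + 1) = stmt6it u 1 n := by
  induction n with
  | zero =>
    rw [stmt6it_succ, stmt6it_zero, stmt6it_zero]
    simp [stmt6F]
  | succ m ih =>
    rw [stmt6it_succ, ih, ← stmt6it_succ]

/-- Key parity lemma: for 0 ≤ a ≤ M, all violations have the same parity. -/
lemma stmt6_parity (u M a : ℝ) (hu0 : 0 < u) (h1M : 1 < M) (hMu : u * M = M - 1)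
    (ha0 : 0 ≤ a) (haM : a ≤ M)
    (n₁ n₂ : ℕ) (h₁ : M < (stmt6it u a n₁).2) (h₂ : M < (stmt6it u a n₂).2) :
    n₁ % 2 = n₂ % 2 := by
  have hP : ∃ n, M < (stmt6it u a n).2 := ⟨n₁, h₁⟩
  classical
  set n₀ := Nat.find hP with hn₀def
  have hn₀ : M < (stmt6it u a n₀).2 := Nat.find_spec hP
  have hn₀pos : n₀ ≠ 0 := by
    intro h
    rw [h] at hn₀
    simp [stmt6it_zero] at hn₀
    linarith
  obtain ⟨m, hm⟩ : ∃ m, n₀ = m + 1 := ⟨n₀ - 1, by omega⟩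
  have hmlt : ¬ (M < (stmt6it u a m).2) := Nat.find_min hP (by omega)
  push_neg at hmlt
  have hA : 0 ≤ (stmt6it u a n₀).1 ∧ (stmt6it u a n₀).1 ≤ M ∧ M < (stmt6it u a n₀).2 := by
    refine ⟨stmt6_fst_nonneg u a hu0.le ha0 n₀, ?_, hn₀⟩
    rw [hm, stmt6it_succ]
    simpa only [stmt6F] using hmlt
  have halt := stmt6_alternate u M a hu0 h1M hMu n₀ hA
  have key : ∀ n, M < (stmt6it u a n).2 → n % 2 = n₀ % 2 := by
    intro n hn
    have hge : n₀ ≤ n := Nat.find_min' hP hn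
    by_contra hpar
    obtain ⟨j, rfl⟩ : ∃ j, n = n₀ + 2 * j + 1 := ⟨(n - n₀ - 1) / 2, by omega⟩
    exact absurd hn (not_lt.mpr (halt j).2)
  rw [key n₁ h₁, key n₂ h₂]

lemma stmt6_exists (u M : ℝ) (hu0 : 0 < u) (h1M : 1 < M) (hMu : u * M = M - 1) :
    ∃ a : ℝ, 0 < a ∧ a ≤ M ∧ ∀ n, (stmt6it u a n).2 ≤ M := by
  by_cases h1 : ∀ n, (stmt6it u 1 n).2 ≤ M
  · exact ⟨1, one_pos, h1M.le, h1⟩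
  push_neg at h1
  by_contra hcon
  push_neg at hcon
  set U : Set ℝ := {a | ∃ n, n % 2 = 1 ∧ M < (stmt6it u a n).2} with hUdef
  set V : Set ℝ := {a | ∃ n, n % 2 = 0 ∧ M < (stmt6it u a n).2} with hVdef
  have hopen : ∀ (r : ℕ), IsOpen {a : ℝ | ∃ n, n % 2 = r ∧ M < (stmt6it u a n).2} := by
    intro r
    have : {a : ℝ | ∃ n, n % 2 = r ∧ M < (stmt6it u a n).2} =
        ⋃ n, {a : ℝ | n % 2 = r ∧ M < (stmt6it u a n).2} := by
      ext a; simp [Set.mem_iUnion]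
    rw [this]
    refine isOpen_iUnion fun n => ?_
    by_cases hn : n % 2 = r
    · have : {a : ℝ | n % 2 = r ∧ M < (stmt6it u a n).2} =
          {a : ℝ | M < (stmt6it u a n).2} := by ext a; simp [hn]
      rw [this]
      exact isOpen_lt continuous_const (stmt6_cont u hu0.le n).2
    · have : {a : ℝ | n % 2 = r ∧ M < (stmt6it u a n).2} = ∅ := by
        ext a; simp [hn]
      rw [this]; exact isOpen_empty
  have hM0 : (0:ℝ) < M := lt_trans one_pos h1M
  -- M ∈ U
  have hMU : M ∈ U := by
    refine ⟨1, rfl, ?_⟩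
    rw [stmt6it_succ, stmt6it_zero]
    simp only [stmt6F]
    have : u * M ^ 2 / 1 = u * M * M := by ring
    rw [this]
    nlinarith
  -- some element of Icc 0 M in V
  have hV : ∃ a ∈ Set.Icc (0:ℝ) M, a ∈ V := by
    by_cases hev : ∃ n, n % 2 = 0 ∧ M < (stmt6it u 1 n).2
    · exact ⟨1, ⟨zero_le_one, h1M.le⟩, hev⟩
    · push_neg at hev
      obtain ⟨n, hn⟩ := h1
      have hodd : n % 2 = 1 := by
        rcases Nat.mod_two_eq_zero_or_one n with h | h
        · exact absurd hn (not_lt.mpr (hev n h))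
        · exact h
      refine ⟨0, ⟨le_refl 0, hM0.le⟩, ⟨n + 1, by omega, ?_⟩⟩
      rw [stmt6_shift]
      exact hn
  obtain ⟨a₀, ha₀S, ha₀V⟩ := hV
  have hcover : Set.Icc (0:ℝ) M ⊆ U ∪ V := by
    intro a ⟨ha0, haM⟩
    rcases eq_or_lt_of_le ha0 with rfl | hapos
    · obtain ⟨n, hn⟩ := h1
      have : M < (stmt6it u 0 (n + 1)).2 := by rw [stmt6_shift]; exact hn
      rcases Nat.mod_two_eq_zero_or_one (n + 1) with h | h
      · exact Or.inr ⟨n + 1, h, this⟩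
      · exact Or.inl ⟨n + 1, h, this⟩
    · obtain ⟨n, hn⟩ := hcon a hapos haM
      rcases Nat.mod_two_eq_zero_or_one n with h | h
      · exact Or.inr ⟨n, h, hn⟩
      · exact Or.inl ⟨n, h, hn⟩
  have hpre := isPreconnected_Icc (a := (0:ℝ)) (b := M)
  obtain ⟨a, haS, haU, haV⟩ := hpre U V (hopen 1) (hopen 0) hcover
    ⟨M, ⟨hM0.le, le_refl M⟩, hMU⟩ ⟨a₀, ha₀S, ha₀V⟩
  obtain ⟨n₁, hp₁, hv₁⟩ := haU
  obtain ⟨n₂, hp₂, hv₂⟩ := haV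
  have := stmt6_parity u M a hu0 h1M hMu haS.1 haS.2 n₁ n₂ hv₁ hv₂
  omega

theorem stmt_6 (u : ℝ) (hu0 : 0 < u) (hu1 : u < 1) :
    ∃ b : ℕ → ℝ, (∀ k : ℕ, 1 ≤ k → 0 < b k) ∧ b 2 = 1 ∧
      (∀ k : ℕ, 2 ≤ k → b k * b (k + 1) = b k + u * (b (k - 1)) ^ 2) ∧
      (∀ k : ℕ, 1 ≤ k → b k ≤ 1 / (1 - u)) := by
  set M : ℝ := 1 / (1 - u) with hMdef
  have hu' : (0:ℝ) < 1 - u := by linarith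
  have h1M : 1 < M := by
    rw [hMdef, lt_div_iff₀ hu']
    linarith
  have hMu : u * M = M - 1 := by
    rw [hMdef]
    field_simp
    ring
  obtain ⟨a, ha0, haM, hbd⟩ := stmt6_exists u M hu0 h1M hMu
  refine ⟨fun k => (stmt6it u a (k - 1)).1, ?_, ?_, ?_, ?_⟩
  · intro k hk
    rcases (by omega : k = 1 ∨ 2 ≤ k) with rfl | hk2
    swap
    obtain ⟨m, rfl⟩ : ∃ m, k = m + 2 := ⟨k - 2, by omega⟩
    rotate_left
    · simpa [stmt6it_zero] using ha0
    · show 0 < (stmt6it u a (m + 2 - 1)).1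
      have : m + 2 - 1 = m + 1 := by omega
      rw [this, stmt6it_succ]
      simp only [stmt6F]
      exact lt_of_lt_of_le one_pos (stmt6_snd_ge_one u a hu0.le m)
  · show (stmt6it u a 1).1 = 1
    rw [stmt6it_succ, stmt6it_zero]
    rfl
  · intro k hk
    obtain ⟨m, rfl⟩ : ∃ m, k = m + 2 := ⟨k - 2, by omega⟩
    show (stmt6it u a (m + 2 - 1)).1 * (stmt6it u a (m + 2 + 1 - 1)).1 =
      (stmt6it u a (m + 2 - 1)).1 + u * ((stmt6it u a (m + 2 - 1 - 1)).1) ^ 2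
    have e1 : m + 2 - 1 = m + 1 := by omega
    have e2 : m + 2 + 1 - 1 = m + 2 := by omega
    have e3 : m + 2 - 1 - 1 = m := by omega
    rw [e3, e1, e2]
    have hfst1 : (stmt6it u a (m + 1)).1 = (stmt6it u a m).2 := by
      rw [stmt6it_succ]; rfl
    have hfst2 : (stmt6it u a (m + 2)).1 = (stmt6it u a (m + 1)).2 := by
      rw [stmt6it_succ (u := u) (a := a) (n := m + 1)]; rfl
    have hsnd : (stmt6it u a (m + 1)).2 = 1 + u * (stmt6it u a m).1 ^ 2 / (stmt6it u a m).2 := by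
      rw [stmt6it_succ]; rfl
    have hpos : (0:ℝ) < (stmt6it u a m).2 := lt_of_lt_of_le one_pos (stmt6_snd_ge_one u a hu0.le m)
    rw [hfst1, hfst2, hsnd]
    field_simp
  · intro k hk
    rcases (by omega : k = 1 ∨ 2 ≤ k) with rfl | hk2
    swap
    obtain ⟨m, rfl⟩ : ∃ m, k = m + 2 := ⟨k - 2, by omega⟩
    rotate_left
    · simpa [stmt6it_zero] using haM
    · show (stmt6it u a (m + 2 - 1)).1 ≤ M
      have : m + 2 - 1 = m + 1 := by omega
      rw [this, stmt6it_succ]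
      exact hbd m
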